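/- Let H be a real Hilbert space, A : H → H a continuous self-adjoint nonnegative linear operator, 0 ≤ p ≤ 1, γ ≥ 1, and u₀ ∈ H with ⟨Au₀,u₀⟩ > 0. Let u : [0,∞) → H be a C¹ solution of u'(t) + (1+t)^{p} ⟨Au(t),u(t)⟩^γ A u(t) = 0 with u(0) = u₀. Then there exists a constant γ₄ > 0 (depending only on u₀, A, γ, p) such that for all t ≥ 0: ⟨Au(t),u(t)⟩^{γ−1} |Au(t)|² ≤ γ₄ (1+t)^{−(p+1)}. -/

import Mathlib

open Real
open scoped RealInnerProductSpace

lemma cs_aux {H : Type*} [NormedAddCommGroup H] [InnerProductSpace ℝ H]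
    (A : H →L[ℝ] H) (hA_sa : ∀ x y : H, ⟪A x, y⟫ = ⟪x, A y⟫)
    (hA_nn : ∀ x : H, 0 ≤ ⟪A x, x⟫) (x y : H) :
    ⟪A x, y⟫ ^ 2 ≤ ⟪A x, x⟫ * ⟪A y, y⟫ := by
  have h : ∀ t : ℝ, 0 ≤ ⟪A y, y⟫ * (t * t) + (2 * ⟪A x, y⟫) * t + ⟪A x, x⟫ := by
    intro t
    have h0 := hA_nn (x + t • y)
    have e1 : ⟪A y, x⟫ = ⟪A x, y⟫ := by
      rw [hA_sa y x, real_inner_comm]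
    simp only [map_add, map_smul, inner_add_left, inner_add_right,
      real_inner_smul_left, real_inner_smul_right] at h0
    rw [e1] at h0; linarith
  have := discrim_le_zero h
  rw [discrim] at this
  nlinarith [this]

lemma mono_aux {T : ℝ} {f f' : ℝ → ℝ}
    (hc : ContinuousOn f (Set.Icc 0 T))
    (hd : ∀ s ∈ Set.Ioo (0:ℝ) T, HasDerivWithinAt f (f' s) (Set.Ioo 0 T) s)
    (h0 : ∀ s ∈ Set.Ioo (0:ℝ) T, 0 ≤ f' s) : MonotoneOn f (Set.Icc 0 T) := by
  apply monotoneOn_of_hasDerivWithinAt_nonneg (convex_Icc 0 T) hc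
  · rw [interior_Icc]; exact hd
  · rw [interior_Icc]; exact h0

/-- `u` (with derivative `u'`) is a global C¹ solution on `[0,∞)` of the parabolic
Cauchy problem `u' + (1+t)^{p} ⟨Au,u⟩^γ A u = 0`, `u(0) = u₀`. -/
def IsParSolution {H : Type*} [NormedAddCommGroup H] [InnerProductSpace ℝ H]
    (A : H →L[ℝ] H) (p γ : ℝ) (u₀ : H) (u u' : ℝ → H) : Prop :=
  u 0 = u₀ ∧
  (∀ t ∈ Set.Ici (0:ℝ), HasDerivWithinAt u (u' t) (Set.Ici 0) t) ∧
  ContinuousOn u' (Set.Ici 0) ∧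
  (∀ t ∈ Set.Ici (0:ℝ),
    u' t + ((1+t) ^ p * ⟪A (u t), u t⟫ ^ γ) • A (u t) = 0)

set_option maxHeartbeats 2000000 in
/-- Decay estimate (3.4): `⟨Au(t),u(t)⟩^{γ-1} |Au(t)|² ≤ γ₄ (1+t)^{-(p+1)}`. -/
theorem parabolic_decay_Au
    {H : Type*} [NormedAddCommGroup H] [InnerProductSpace ℝ H]
    (A : H →L[ℝ] H)
    (hA_sa : ∀ x y : H, ⟪A x, y⟫ = ⟪x, A y⟫)
    (hA_nn : ∀ x : H, 0 ≤ ⟪A x, x⟫)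
    (p γ : ℝ) (hp0 : 0 ≤ p) (hp1 : p ≤ 1) (hγ : 1 ≤ γ)
    (u₀ : H) (hmdg : 0 < ⟪A u₀, u₀⟫)
    (u u' : ℝ → H) (hu : IsParSolution A p γ u₀ u u') :
    ∃ γ₄ > 0, ∀ t ∈ Set.Ici (0:ℝ),
      ⟪A (u t), u t⟫ ^ (γ-1) * ‖A (u t)‖ ^ 2 ≤ γ₄ * (1+t) ^ (-(p+1)) := by
  obtain ⟨hu0, hud, hucont, hueq⟩ := hu
  set a : ℝ → ℝ := fun s => ⟪A (u s), u s⟫ with ha_def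
  set c : ℝ → ℝ := fun s => ⟪A (u s), A (u s)⟫ with hc_def
  set d : ℝ → ℝ := fun s => ⟪A (A (u s)), A (u s)⟫ with hd_def
  set k : ℝ → ℝ := fun s => (1+s) ^ p * a s ^ γ with hk_def
  have hueq' : ∀ s ∈ Set.Ici (0:ℝ), u' s = (-(k s)) • A (u s) := by
    intro s hs
    have h := hueq s hs
    have h2 : u' s = -(((1+s) ^ p * a s ^ γ) • A (u s)) := eq_neg_of_add_eq_zero_left h
    rw [h2, ← neg_smul, hk_def]
  have ha_nn : ∀ s, 0 ≤ a s := fun s => hA_nn (u s)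
  have hc_nn : ∀ s, 0 ≤ c s := fun s => real_inner_self_nonneg
  have hd_nn : ∀ s, 0 ≤ d s := fun s => hA_nn (A (u s))
  have hcs : ∀ s, c s ^ 2 ≤ a s * d s := by
    intro s
    have := cs_aux A hA_sa hA_nn (u s) (A (u s))
    simpa [ha_def, hc_def, hd_def, mul_comm] using this
  have hk_nn : ∀ s ∈ Set.Ici (0:ℝ), 0 ≤ k s := by
    intro s hs
    exact mul_nonneg (rpow_nonneg (by simp at hs; linarith) p) (rpow_nonneg (ha_nn s) γ)
  have hAud : ∀ s ∈ Set.Ici (0:ℝ), HasDerivWithinAt (fun τ => A (u τ)) (A (u' s)) (Set.Ici 0) s :=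
    fun s hs => A.hasFDerivAt.comp_hasDerivWithinAt s (hud s hs)
  have ha_deriv : ∀ s ∈ Set.Ici (0:ℝ), HasDerivWithinAt a (-(2 * k s * c s)) (Set.Ici 0) s := by
    intro s hs
    have h := HasDerivWithinAt.inner ℝ (hAud s hs) (hud s hs)
    refine h.congr_deriv ?_
    rw [hueq' s hs]
    simp only [real_inner_smul_right, map_smul, real_inner_smul_left]
    have e1 : ⟪A (A (u s)), u s⟫ = ⟪A (u s), A (u s)⟫ := by rw [hA_sa (A (u s)) (u s)]
    rw [e1]; rw [hc_def]; ring
  have hc_deriv : ∀ s ∈ Set.Ici (0:ℝ), HasDerivWithinAt c (-(2 * k s * d s)) (Set.Ici 0) s := by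
    intro s hs
    have h := HasDerivWithinAt.inner ℝ (hAud s hs) (hAud s hs)
    refine h.congr_deriv ?_
    rw [hueq' s hs]
    simp only [real_inner_smul_right, map_smul, real_inner_smul_left]
    have e1 : ⟪A (u s), A (A (u s))⟫ = ⟪A (A (u s)), A (u s)⟫ := real_inner_comm _ _
    rw [e1, hd_def]; ring
  have ha_cont : ContinuousOn a (Set.Ici 0) := fun s hs => (ha_deriv s hs).continuousWithinAt
  have hc_cont : ContinuousOn c (Set.Ici 0) := fun s hs => (hc_deriv s hs).continuousWithinAt
  -- monotonicity of a and c
  have hIoo_Ici : ∀ T : ℝ, Set.Ioo (0:ℝ) T ⊆ Set.Ici 0 := fun T x hx => le_of_lt hx.1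
  have hIcc_Ici : ∀ T : ℝ, Set.Icc (0:ℝ) T ⊆ Set.Ici 0 := fun T x hx => hx.1
  have anti_gen : ∀ (f f' : ℝ → ℝ),
      (∀ s ∈ Set.Ici (0:ℝ), HasDerivWithinAt f (f' s) (Set.Ici 0) s) →
      (∀ s ∈ Set.Ici (0:ℝ), f' s ≤ 0) →
      ∀ s t : ℝ, 0 ≤ s → s ≤ t → f t ≤ f s := by
    intro f f' hd h0 s t hs hst
    have ht0 : (0:ℝ) ≤ t := le_trans hs hst
    have hmono : MonotoneOn (fun x => -f x) (Set.Icc 0 t) := by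
      apply mono_aux
      · exact (fun x hx => ((hd x (hIcc_Ici t hx)).continuousWithinAt.mono (hIcc_Ici t)).neg)
      · exact fun x hx => ((hd x (hIoo_Ici t hx)).mono (hIoo_Ici t)).neg
      · exact fun x hx => neg_nonneg.mpr (h0 x (hIoo_Ici t hx))
    have := hmono ⟨hs, hst⟩ ⟨ht0, le_refl t⟩ hst
    simpa using this
  have ha_anti : ∀ s t : ℝ, 0 ≤ s → s ≤ t → a t ≤ a s := by
    apply anti_gen a (fun s => -(2 * k s * c s)) ha_deriv
    intro s hs
    have := mul_nonneg (mul_nonneg (by norm_num : (0:ℝ) ≤ 2) (hk_nn s hs)) (hc_nn s)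
    linarith
  have hc_anti : ∀ s t : ℝ, 0 ≤ s → s ≤ t → c t ≤ c s := by
    apply anti_gen c (fun s => -(2 * k s * d s)) hc_deriv
    intro s hs
    have := mul_nonneg (mul_nonneg (by norm_num : (0:ℝ) ≤ 2) (hk_nn s hs)) (hd_nn s)
    linarith
  have ha0 : 0 < a 0 := by
    have : a 0 = ⟪A (u 0), u 0⟫ := rfl
    rw [this, hu0]; exact hmdg
  have hAu0 : A (u 0) ≠ 0 := by
    intro h
    rw [show a 0 = ⟪A (u 0), u 0⟫ from rfl, h] at ha0
    simp at ha0
  have hc0 : 0 < c 0 := by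
    rcases eq_or_lt_of_le (hc_nn 0) with h|h
    · exact absurd ((inner_self_eq_zero (𝕜 := ℝ)).mp h.symm) hAu0
    · exact h
  -- positivity of a
  have ha_pos : ∀ t : ℝ, 0 ≤ t → 0 < a t := by
    intro t ht
    set C : ℝ := 2 * (1+t) ^ p * a 0 ^ (γ-1) * c 0 with hC_def
    have hC_nn : 0 ≤ C := by
      apply mul_nonneg (mul_nonneg (mul_nonneg (by norm_num) _) _) (le_of_lt hc0)
      · exact rpow_nonneg (by linarith) p
      · exact rpow_nonneg (le_of_lt ha0) (γ-1)
    set v : ℝ → ℝ := fun s => a s * Real.exp (C * s) with hv_def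
    have hv_deriv : ∀ s ∈ Set.Ici (0:ℝ),
        HasDerivWithinAt v ((-(2 * k s * c s)) * Real.exp (C*s) + a s * (Real.exp (C*s) * C))
          (Set.Ici 0) s := by
      intro s hs
      have hexp : HasDerivWithinAt (fun τ => Real.exp (C*τ)) (Real.exp (C*s) * C) (Set.Ici 0) s := by
        simpa using ((HasDerivAt.const_mul C (hasDerivAt_id s)).exp.hasDerivWithinAt (s := Set.Ici 0))
      exact (ha_deriv s hs).mul hexp
    have hv_mono : MonotoneOn v (Set.Icc 0 t) := by
      apply mono_aux
      · exact fun x hx => (hv_deriv x (hIcc_Ici t hx)).continuousWithinAt.mono (hIcc_Ici t)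
      · exact fun x hx => (hv_deriv x (hIoo_Ici t hx)).mono (hIoo_Ici t)
      · intro s hs
        have hs0 : (0:ℝ) ≤ s := le_of_lt hs.1
        have hst : s ≤ t := le_of_lt hs.2
        -- key bound : 2 * k s * c s ≤ C * a s
        have e1 : (1+s) ^ p ≤ (1+t) ^ p := by
          apply rpow_le_rpow (by linarith) (by linarith) hp0
        have e2 : a s ^ γ ≤ a 0 ^ (γ-1) * a s := by
          rcases eq_or_lt_of_le (ha_nn s) with h|h
          · rw [← h, Real.zero_rpow (by linarith : γ ≠ 0)]
            simp
          · have hsplit : a s ^ γ = a s ^ (γ-1) * a s := by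
              have := Real.rpow_add h (γ-1) 1
              rw [show γ-1+1 = γ by ring, Real.rpow_one] at this
              exact this
            rw [hsplit]
            have hle : a s ^ (γ-1) ≤ a 0 ^ (γ-1) :=
              rpow_le_rpow (le_of_lt h) (ha_anti 0 s (le_refl 0) hs0) (by linarith)
            nlinarith [le_of_lt h]
        have e3 : c s ≤ c 0 := hc_anti 0 s (le_refl 0) hs0
        have e4 : (1+s) ^ p * a s ^ γ ≤ (1+t) ^ p * (a 0 ^ (γ-1) * a s) := by
          apply mul_le_mul e1 e2 (rpow_nonneg (ha_nn s) γ) (rpow_nonneg (by linarith) p)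
        have e5 : ((1+s) ^ p * a s ^ γ) * c s ≤ ((1+t) ^ p * (a 0 ^ (γ-1) * a s)) * c 0 := by
          apply mul_le_mul e4 e3 (hc_nn s)
          apply mul_nonneg (rpow_nonneg (by linarith) p)
          exact mul_nonneg (rpow_nonneg (le_of_lt ha0) _) (ha_nn s)
        have hkey : 2 * k s * c s ≤ C * a s := by
          rw [hk_def, hC_def]; simp only; nlinarith [e5]
        have hexp : (0:ℝ) < Real.exp (C * s) := Real.exp_pos _
        have heq : (-(2 * k s * c s)) * Real.exp (C*s) + a s * (Real.exp (C*s) * C)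
            = Real.exp (C*s) * (C * a s - 2 * k s * c s) := by ring
        rw [heq]
        exact mul_nonneg (le_of_lt hexp) (by linarith)
    have hv0 : v 0 ≤ v t := hv_mono ⟨le_refl 0, ht⟩ ⟨ht, le_refl t⟩ ht
    have hv00 : v 0 = a 0 := by rw [hv_def]; simp
    have hexp : (0:ℝ) < Real.exp (C * t) := Real.exp_pos _
    rw [hv00] at hv0
    rw [hv_def] at hv0; simp only at hv0
    nlinarith [hv0, hexp, ha0]
  -- choose γ₄
  have hG0 : 0 < a 0 ^ (γ-1) * c 0 := mul_pos (rpow_pos_of_pos ha0 _) hc0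
  have hp1pos : (0:ℝ) < p + 1 := by linarith
  refine ⟨4 * (a 0 ^ (γ-1) * c 0) + (p+1), by linarith, ?_⟩
  intro t ht
  simp only [Set.mem_Ici] at ht
  have hnorm : ‖A (u t)‖ ^ 2 = c t := (real_inner_self_eq_norm_sq (A (u t))).symm
  rw [hnorm]
  have h1t : (0:ℝ) < 1 + t := by linarith
  have hRpos : 0 < (1+t) ^ (p+1) := rpow_pos_of_pos h1t _
  have hRneg : (1+t) ^ (-(p+1)) = ((1+t)^(p+1))⁻¹ := Real.rpow_neg (le_of_lt h1t) _
  rcases eq_or_lt_of_le (hc_nn t) with hct|hct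
  · -- degenerate case c t = 0
    rw [← hct, mul_zero]
    have : 0 < (4 * (a 0 ^ (γ-1) * c 0) + (p+1)) * (1+t) ^ (-(p+1)) :=
      mul_pos (by linarith) (rpow_pos_of_pos h1t _)
    linarith
  · have hcIcc : ∀ s ∈ Set.Icc (0:ℝ) t, 0 < c s :=
      fun s hs => lt_of_lt_of_le hct (hc_anti s t hs.1 hs.2)
    set φ : ℝ → ℝ := fun s => a s ^ (1-γ) / c s with hφ_def
    set ψ : ℝ → ℝ := fun s => φ s - (2/(p+1)) * ((1+s)^(p+1) - 1) with hψ_def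
    have hψmono : MonotoneOn ψ (Set.Icc 0 t) := by
      apply mono_aux (f' := fun s =>
        ((-(2 * k s * c s)) * (1-γ) * a s ^ (1-γ-1) * c s - a s ^ (1-γ) * (-(2 * k s * d s)))
            / (c s)^2
          - (2/(p+1)) * (1 * (p+1) * (1+s)^(p+1-1)))
      · apply ContinuousOn.sub
        · apply ContinuousOn.div
          · exact ContinuousOn.rpow_const (ha_cont.mono (hIcc_Ici t))
              (fun x hx => Or.inl (ne_of_gt (ha_pos x hx.1)))
          · exact hc_cont.mono (hIcc_Ici t)
          · exact fun x hx => ne_of_gt (hcIcc x hx)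
        · apply ContinuousOn.mul continuousOn_const
          apply ContinuousOn.sub _ continuousOn_const
          exact ContinuousOn.rpow_const
            ((continuous_const.add continuous_id).continuousOn)
            (fun x hx => Or.inr (by linarith))
      · intro s hs
        have hsI : s ∈ Set.Ici (0:ℝ) := hIoo_Ici t hs
        have hapos := ha_pos s (le_of_lt hs.1)
        have hcpos := hcIcc s ⟨le_of_lt hs.1, le_of_lt hs.2⟩
        have h1 : HasDerivWithinAt (fun τ => a τ ^ (1-γ))
            ((-(2 * k s * c s)) * (1-γ) * a s ^ (1-γ-1)) (Set.Ioo 0 t) s :=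
          ((ha_deriv s hsI).mono (hIoo_Ici t)).rpow_const (Or.inl (ne_of_gt hapos))
        have h2 := (hc_deriv s hsI).mono (hIoo_Ici t)
        have h3 := h1.div h2 (ne_of_gt hcpos)
        have h4 : HasDerivWithinAt (fun τ => (1+τ)^(p+1))
            (1 * (p+1) * (1+s)^(p+1-1)) (Set.Ioo 0 t) s :=
          (((hasDerivAt_id s).const_add 1).hasDerivWithinAt).rpow_const (Or.inr (by linarith))
        exact h3.sub ((h4.sub_const 1).const_mul (2/(p+1)))
      · intro s hs
        have hapos := ha_pos s (le_of_lt hs.1)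
        have hcpos := hcIcc s ⟨le_of_lt hs.1, le_of_lt hs.2⟩
        have hβ : (0:ℝ) ≤ (1+s)^p := rpow_nonneg (by nlinarith [hs.1]) p
        have id1 : a s ^ γ * a s ^ (1-γ-1) = 1 := by
          rw [← Real.rpow_add hapos, show γ + (1-γ-1) = 0 by ring, Real.rpow_zero]
        have id2 : a s ^ γ * a s ^ (1-γ) = a s := by
          rw [← Real.rpow_add hapos, show γ + (1-γ) = 1 by ring, Real.rpow_one]
        have keyeq : (-(2 * k s * c s)) * (1-γ) * a s ^ (1-γ-1) * c s
            - a s ^ (1-γ) * (-(2 * k s * d s))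
            = 2*(1+s)^p*((γ-1)*(c s)^2 + a s * d s) := by
          simp only [hk_def]
          linear_combination (2*(1+s)^p*(γ-1)*(c s)^2) * id1 + (2*(1+s)^p*(d s)) * id2
        have hnum : 2*(1+s)^p * (c s)^2 ≤ 2*(1+s)^p*((γ-1)*(c s)^2 + a s * d s) := by
          nlinarith [mul_nonneg hβ (sub_nonneg.mpr (hcs s)),
            mul_nonneg hβ (mul_nonneg (by linarith : (0:ℝ) ≤ γ-1) (sq_nonneg (c s)))]
        have hdivle : 2*(1+s)^p ≤
            ((-(2 * k s * c s)) * (1-γ) * a s ^ (1-γ-1) * c s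
              - a s ^ (1-γ) * (-(2 * k s * d s))) / (c s)^2 := by
          rw [le_div_iff₀ (by positivity : (0:ℝ) < (c s)^2), keyeq]
          exact hnum
        have hsub : (2/(p+1)) * (1 * (p+1) * (1+s)^(p+1-1)) = 2*(1+s)^p := by
          rw [show p+1-1 = p by ring]
          field_simp
        rw [hsub] at *
        linarith [hdivle]
    have hψ0t : ψ 0 ≤ ψ t := hψmono ⟨le_refl 0, ht⟩ ⟨ht, le_refl t⟩ ht
    have hψ0 : ψ 0 = φ 0 := by
      rw [hψ_def]; simp only
      norm_num
    have hφ0pos : 0 < φ 0 := div_pos (rpow_pos_of_pos ha0 _) hc0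
    have hφtpos : 0 < φ t := div_pos (rpow_pos_of_pos (ha_pos t ht) _) hct
    have hmain : φ 0 + (2/(p+1)) * ((1+t)^(p+1) - 1) ≤ φ t := by
      rw [hψ0] at hψ0t
      rw [hψ_def] at hψ0t
      simp only at hψ0t
      linarith
    have hRge1 : 1 ≤ (1+t)^(p+1) := by
      calc (1:ℝ) = 1 ^ (p+1) := (Real.one_rpow _).symm
      _ ≤ (1+t)^(p+1) := rpow_le_rpow zero_le_one (by linarith) (by linarith)
    have hGt_eq : (a t ^ (γ-1) * c t) * φ t = 1 := by
      rw [hφ_def]; simp only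
      have idt : a t ^ (γ-1) * a t ^ (1-γ) = 1 := by
        rw [← Real.rpow_add (ha_pos t ht), show (γ-1) + (1-γ) = 0 by ring, Real.rpow_zero]
      field_simp
      linear_combination idt
    have hG0_eq : (a 0 ^ (γ-1) * c 0) * φ 0 = 1 := by
      rw [hφ_def]; simp only
      have id0 : a 0 ^ (γ-1) * a 0 ^ (1-γ) = 1 := by
        rw [← Real.rpow_add ha0, show (γ-1) + (1-γ) = 0 by ring, Real.rpow_zero]
      field_simp
      linear_combination id0
    have hGt_pos : 0 < a t ^ (γ-1) * c t := mul_pos (rpow_pos_of_pos (ha_pos t ht) _) hct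
    rw [hRneg, ← div_eq_mul_inv, le_div_iff₀ hRpos]
    rcases le_or_gt t 1 with htle|htgt
    · -- small times
      have hR4 : (1+t)^(p+1) ≤ 4 := by
        calc (1+t)^(p+1) ≤ 2^(p+1) := rpow_le_rpow (by linarith) (by linarith) (by linarith)
        _ ≤ 2^(2:ℝ) := rpow_le_rpow_of_exponent_le (by norm_num) (by linarith)
        _ = 4 := by
          rw [show (2:ℝ) = ((2:ℕ):ℝ) by norm_num, Real.rpow_natCast]
          norm_num
      have hφ0le : φ 0 ≤ φ t := by
        have h2 : 0 ≤ (2/(p+1)) * ((1+t)^(p+1) - 1) :=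
          mul_nonneg (by positivity) (by linarith)
        linarith
      have hGtle : a t ^ (γ-1) * c t ≤ a 0 ^ (γ-1) * c 0 := by
        have e1 : a t ^ (γ-1) * c t = 1 / φ t :=
          eq_one_div_of_mul_eq_one_left (by linear_combination hGt_eq)
        have e0 : a 0 ^ (γ-1) * c 0 = 1 / φ 0 :=
          eq_one_div_of_mul_eq_one_left (by linear_combination hG0_eq)
        rw [e1, e0]
        exact one_div_le_one_div_of_le hφ0pos hφ0le
      have f1 : (a t ^ (γ-1) * c t) * (1+t)^(p+1) ≤ (a t ^ (γ-1) * c t) * 4 :=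
        mul_le_mul_of_nonneg_left hR4 (le_of_lt hGt_pos)
      have f2 : (a t ^ (γ-1) * c t) * 4 ≤ (a 0 ^ (γ-1) * c 0) * 4 := by linarith
      linarith
    · -- large times
      have hR2 : 2 ≤ (1+t)^(p+1) := by
        calc (2:ℝ) = 2 ^ (1:ℝ) := (Real.rpow_one 2).symm
        _ ≤ 2^(p+1) := rpow_le_rpow_of_exponent_le (by norm_num) (by linarith)
        _ ≤ (1+t)^(p+1) := rpow_le_rpow (by norm_num) (by linarith) (by linarith)
      have hφt : (1+t)^(p+1)/(p+1) ≤ φ t := by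
        have h1 : (1+t)^(p+1)/2 ≤ (1+t)^(p+1) - 1 := by linarith
        have h2 : (2/(p+1)) * ((1+t)^(p+1)/2) ≤ (2/(p+1)) * ((1+t)^(p+1) - 1) :=
          mul_le_mul_of_nonneg_left h1 (by positivity)
        have h3 : (2/(p+1)) * ((1+t)^(p+1)/2) = (1+t)^(p+1)/(p+1) := by
          field_simp
        linarith
      have hle : (1+t)^(p+1) ≤ φ t * (p+1) := (div_le_iff₀ hp1pos).mp hφt
      have f1 : (a t ^ (γ-1) * c t) * (1+t)^(p+1) ≤ (a t ^ (γ-1) * c t) * (φ t * (p+1)) :=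
        mul_le_mul_of_nonneg_left hle (le_of_lt hGt_pos)
      have f2 : (a t ^ (γ-1) * c t) * (φ t * (p+1)) = p+1 := by
        rw [← mul_assoc, hGt_eq, one_mul]
      linarith
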